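/- Let α ∈ (0,1), α₀, β₀ > 0, λ ∈ ℂ, and let a, b be continuous complex-valued functions on [−1,1] with a not identically zero. Assume (2^α/(α·Γ(α)))·‖b‖_{∞,[−1,1]} + |λ| < (1/β₀)·ln(α·Γ(α)/(e·α₀·β₀·2^α·‖a‖_{∞,[−1,1]})). Then the equation r = (α₀·2^α/(α·Γ(α)))·‖a‖_{∞,[−1,1]}·e^{β₀·r} + (2^α/(α·Γ(α)))·‖b‖_{∞,[−1,1]} + |λ| has exactly two solutions R₀ < R₁ in [0,∞), and they satisfy 0 < R₀ < (1/β₀)·ln(α·Γ(α)/(α₀·β₀·2^α·‖a‖_{∞,[−1,1]})) < R₁. -/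

import Mathlib

/-- `‖f‖_{∞,[−1,1]}`, the supremum of `‖f‖` over `[−1,1]`. -/
noncomputable def supSeg (f : ℝ → ℂ) : ℝ := ⨆ t : Set.Icc (-1 : ℝ) 1, ‖f t.1‖

lemma exp_ge_sq_div_four {x : ℝ} (hx : 0 ≤ x) : x ^ 2 / 4 ≤ Real.exp x := by
  have h1 : x / 2 + 1 ≤ Real.exp (x / 2) := Real.add_one_le_exp (x / 2)
  have h2 : Real.exp x = Real.exp (x / 2) * Real.exp (x / 2) := by
    rw [← Real.exp_add]; ring_nf
  nlinarith [Real.exp_pos (x / 2)]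

lemma key (A B β : ℝ) (hA : 0 < A) (hB : 0 ≤ B) (hβ : 0 < β)
    (hcond : B < (1 / β) * Real.log (1 / (Real.exp 1 * A * β))) :
    ∃ R₀ R₁ : ℝ, 0 < R₀ ∧ R₀ < R₁ ∧
      R₀ = A * Real.exp (β * R₀) + B ∧ R₁ = A * Real.exp (β * R₁) + B ∧
      (∀ r : ℝ, 0 ≤ r → r = A * Real.exp (β * r) + B → r = R₀ ∨ r = R₁) ∧
      R₀ < (1 / β) * Real.log (1 / (A * β)) ∧
      (1 / β) * Real.log (1 / (A * β)) < R₁ := by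
  have hAβ : 0 < A * β := mul_pos hA hβ
  set rs := (1 / β) * Real.log (1 / (A * β)) with hrs
  have hlog : Real.log (1 / (Real.exp 1 * A * β)) = Real.log (1 / (A * β)) - 1 := by
    rw [show (1:ℝ) / (Real.exp 1 * A * β) = (1 / (A * β)) / Real.exp 1 by
      field_simp
    , Real.log_div (by positivity) (Real.exp_ne_zero 1), Real.log_exp]
  rw [hlog, mul_sub, mul_one] at hcond
  have hcond' : B < rs - 1 / β := hcond
  have hrs_pos : 1 / β < rs := by
    have : 0 < 1 / β := by positivity
    linarith
  have h0rs : 0 < rs := lt_trans (by positivity) hrs_pos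
  set h : ℝ → ℝ := fun r => A * Real.exp (β * r) + B - r with hh
  have hcont : Continuous h := by
    rw [hh]; fun_prop
  have hderiv : ∀ r : ℝ, HasDerivAt h (A * (Real.exp (β * r) * β) - 1) r := by
    intro r
    have h1 : HasDerivAt (fun x : ℝ => β * x) β r := by
      simpa using (hasDerivAt_id r).const_mul β
    have h2 := ((h1.exp.const_mul A).add_const B).sub (hasDerivAt_id r)
    exact h2
  have hexp_rs : Real.exp (β * rs) = 1 / (A * β) := by
    rw [hrs, show β * ((1 / β) * Real.log (1 / (A * β))) = Real.log (1 / (A * β)) by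
      field_simp]
    exact Real.exp_log (by positivity)
  have hval_rs : h rs = 1 / β + B - rs := by
    show A * Real.exp (β * rs) + B - rs = 1 / β + B - rs
    rw [hexp_rs]
    field_simp
  have hrs_neg : h rs < 0 := by rw [hval_rs]; linarith
  have h0_pos : 0 < h 0 := by
    show 0 < A * Real.exp (β * 0) + B - 0
    simp [Real.exp_zero]
    nlinarith
  have hanti : StrictAntiOn h (Set.Iic rs) := by
    apply strictAntiOn_of_deriv_neg (convex_Iic rs) hcont.continuousOn
    intro r hr
    rw [interior_Iic] at hr
    rw [(hderiv r).deriv]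
    have h1 : Real.exp (β * r) < Real.exp (β * rs) :=
      Real.exp_lt_exp.2 (by exact mul_lt_mul_of_pos_left hr hβ)
    rw [hexp_rs] at h1
    have h2 : A * β * Real.exp (β * r) < A * β * (1 / (A * β)) :=
      mul_lt_mul_of_pos_left h1 hAβ
    rw [mul_one_div, div_self (ne_of_gt hAβ)] at h2
    nlinarith
  have hmono : StrictMonoOn h (Set.Ici rs) := by
    apply strictMonoOn_of_deriv_pos (convex_Ici rs) hcont.continuousOn
    intro r hr
    rw [interior_Ici] at hr
    rw [(hderiv r).deriv]
    have h1 : Real.exp (β * rs) < Real.exp (β * r) :=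
      Real.exp_lt_exp.2 (by exact mul_lt_mul_of_pos_left hr hβ)
    rw [hexp_rs] at h1
    have h2 : A * β * (1 / (A * β)) < A * β * Real.exp (β * r) :=
      mul_lt_mul_of_pos_left h1 hAβ
    rw [mul_one_div, div_self (ne_of_gt hAβ)] at h2
    nlinarith
  -- find R₀
  have hivt0 : (0:ℝ) ∈ h '' Set.Ioo 0 rs := by
    apply intermediate_value_Ioo' (le_of_lt h0rs) hcont.continuousOn
    exact ⟨hrs_neg, h0_pos⟩
  obtain ⟨R₀, hR₀mem, hR₀⟩ := hivt0
  -- find M with h M > 0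
  set M := max (rs + 1) (4 / (A * β ^ 2) + 1) with hM
  have hMrs : rs + 1 ≤ M := le_max_left _ _
  have hM2 : 4 / (A * β ^ 2) + 1 ≤ M := le_max_right _ _
  have hMpos : 0 < M := by linarith
  have hAβ2 : 0 < A * β ^ 2 := by positivity
  have hq : 4 + A * β ^ 2 ≤ A * β ^ 2 * M := by
    have := mul_le_mul_of_nonneg_left hM2 hAβ2.le
    rw [mul_add, mul_one, mul_div_cancel₀ _ (ne_of_gt hAβ2)] at this
    linarith
  have hMexp : (β * M) ^ 2 / 4 ≤ Real.exp (β * M) := exp_ge_sq_div_four (by positivity)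
  have hM_pos : 0 < h M := by
    show 0 < A * Real.exp (β * M) + B - M
    have h1 : A * ((β * M) ^ 2 / 4) ≤ A * Real.exp (β * M) :=
      mul_le_mul_of_nonneg_left hMexp hA.le
    nlinarith [mul_le_mul_of_nonneg_right hq hMpos.le]
  have hivt1 : (0:ℝ) ∈ h '' Set.Ioo rs M := by
    apply intermediate_value_Ioo (by linarith) hcont.continuousOn
    exact ⟨hrs_neg, hM_pos⟩
  obtain ⟨R₁, hR₁mem, hR₁⟩ := hivt1
  refine ⟨R₀, R₁, hR₀mem.1, lt_trans hR₀mem.2 hR₁mem.1, ?_, ?_, ?_, hR₀mem.2, hR₁mem.1⟩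
  · have : A * Real.exp (β * R₀) + B - R₀ = 0 := hR₀
    linarith
  · have : A * Real.exp (β * R₁) + B - R₁ = 0 := hR₁
    linarith
  · intro r hr hreq
    have hzr : h r = 0 := by
      show A * Real.exp (β * r) + B - r = 0
      linarith
    rcases le_total r rs with hcase | hcase
    · left
      exact hanti.injOn hcase (le_of_lt hR₀mem.2) (by rw [hzr, hR₀])
    · right
      exact hmono.injOn hcase (le_of_lt hR₁mem.1) (by rw [hzr, hR₁])

theorem stmt_1 (α α₀ β₀ : ℝ) (lam : ℂ) (a b : ℝ → ℂ)
    (hα : α ∈ Set.Ioo (0:ℝ) 1) (hα₀ : 0 < α₀) (hβ₀ : 0 < β₀)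
    (ha : ContinuousOn a (Set.Icc (-1:ℝ) 1)) (hb : ContinuousOn b (Set.Icc (-1:ℝ) 1))
    (ha0 : ∃ t ∈ Set.Icc (-1:ℝ) 1, a t ≠ 0)
    (hcond : 2 ^ α / (α * Real.Gamma α) * supSeg b + ‖lam‖ <
      (1 / β₀) * Real.log (α * Real.Gamma α /
        (Real.exp 1 * α₀ * β₀ * 2 ^ α * supSeg a))) :
    ∃ R₀ R₁ : ℝ, 0 < R₀ ∧ R₀ < R₁ ∧
      R₀ = α₀ * 2 ^ α / (α * Real.Gamma α) * supSeg a * Real.exp (β₀ * R₀) +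
            2 ^ α / (α * Real.Gamma α) * supSeg b + ‖lam‖ ∧
      R₁ = α₀ * 2 ^ α / (α * Real.Gamma α) * supSeg a * Real.exp (β₀ * R₁) +
            2 ^ α / (α * Real.Gamma α) * supSeg b + ‖lam‖ ∧
      (∀ r : ℝ, 0 ≤ r →
        r = α₀ * 2 ^ α / (α * Real.Gamma α) * supSeg a * Real.exp (β₀ * r) +
              2 ^ α / (α * Real.Gamma α) * supSeg b + ‖lam‖ →
        r = R₀ ∨ r = R₁) ∧
      R₀ < (1 / β₀) * Real.log (α * Real.Gamma α / (α₀ * β₀ * 2 ^ α * supSeg a)) ∧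
      (1 / β₀) * Real.log (α * Real.Gamma α / (α₀ * β₀ * 2 ^ α * supSeg a)) < R₁ := by
  have hαpos : 0 < α := hα.1
  have hΓ : 0 < Real.Gamma α := Real.Gamma_pos_of_pos hαpos
  have hαΓ : 0 < α * Real.Gamma α := mul_pos hαpos hΓ
  have h2p : (0:ℝ) < 2 ^ α := Real.rpow_pos_of_pos two_pos α
  -- supSeg a > 0
  have hbdd : BddAbove (Set.range fun s : Set.Icc (-1:ℝ) 1 => ‖a s.1‖) := by
    have := (isCompact_Icc.image_of_continuousOn ha.norm).bddAbove
    rwa [Set.image_eq_range] at this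
  obtain ⟨t, ht, hat⟩ := ha0
  have hS : 0 < supSeg a := by
    have h1 : ‖a t‖ ≤ supSeg a := le_ciSup hbdd ⟨t, ht⟩
    have h2 : 0 < ‖a t‖ := norm_pos_iff.2 hat
    linarith
  have hT : 0 ≤ supSeg b := Real.iSup_nonneg fun s => norm_nonneg _
  set A := α₀ * 2 ^ α / (α * Real.Gamma α) * supSeg a with hAdef
  set C := 2 ^ α / (α * Real.Gamma α) * supSeg b with hCdef
  have hA : 0 < A := by
    rw [hAdef]
    exact mul_pos (div_pos (mul_pos hα₀ h2p) hαΓ) hS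
  have hB : 0 ≤ C + ‖lam‖ :=
    add_nonneg (mul_nonneg (le_of_lt (div_pos h2p hαΓ)) hT) (norm_nonneg lam)
  have harg1 : α * Real.Gamma α / (Real.exp 1 * α₀ * β₀ * 2 ^ α * supSeg a)
      = 1 / (Real.exp 1 * A * β₀) := by
    rw [hAdef]
    field_simp
  have harg2 : α * Real.Gamma α / (α₀ * β₀ * 2 ^ α * supSeg a) = 1 / (A * β₀) := by
    rw [hAdef]
    field_simp
  have hcond' : C + ‖lam‖ < (1 / β₀) * Real.log (1 / (Real.exp 1 * A * β₀)) := by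
    rw [← harg1]; exact hcond
  obtain ⟨R₀, R₁, hR₀pos, hlt, heq0, heq1, huniq, hb0, hb1⟩ :=
    key A (C + ‖lam‖) β₀ hA hB hβ₀ hcond'
  refine ⟨R₀, R₁, hR₀pos, hlt, by linarith, by linarith, ?_, ?_, ?_⟩
  · intro r hr hreq
    exact huniq r hr (by linarith)
  · rw [harg2]; exact hb0
  · rw [harg2]; exact hb1
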